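/- Let G be a simple graph, and let uv be an edge of G with d_G(u) + d_G(v) ≤ 10. If the edges of G - uv can be partitioned into four linear forests and a matching, then the edges of G can be partitioned into four linear forests and a matching. -/

import Mathlib

/-- The colour class `i` of an edge-colouring `c` of the graph `G`:
the spanning subgraph whose edges are the edges of `G` coloured `i`. -/
def colorClass {V : Type*} (G : SimpleGraph V) {k : ℕ} (c : Sym2 V → Fin k) (i : Fin k) :
    SimpleGraph V where
  Adj a b := G.Adj a b ∧ c s(a, b) = i
  symm := ⟨fun a b ⟨h, hc⟩ => ⟨h.symm, by rwa [Sym2.eq_swap]⟩⟩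
  loopless := ⟨fun a ⟨h, _⟩ => G.loopless.irrefl a h⟩

/-- A linear forest: an acyclic graph of maximum degree at most `2`,
equivalently a forest every connected component of which is a path. -/
def IsLinearForest {V : Type*} (H : SimpleGraph V) : Prop :=
  H.IsAcyclic ∧ ∀ v, (H.neighborSet v).ncard ≤ 2

/-- A matching (as a graph): every vertex has at most one neighbour,
i.e. the edges are pairwise non-adjacent. -/
def IsMatchingGraph {V : Type*} (H : SimpleGraph V) : Prop :=
  ∀ v, (H.neighborSet v).ncard ≤ 1

/-- `G` has a partition of its edge set into `k` linear forests and one matching: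
colour `0` is the matching, colours `1,…,k` are the linear forests. -/
def HasPartitionLFM {V : Type*} (G : SimpleGraph V) (k : ℕ) : Prop :=
  ∃ c : Sym2 V → Fin (k + 1), IsMatchingGraph (colorClass G c 0) ∧
    ∀ i : Fin (k + 1), i ≠ 0 → IsLinearForest (colorClass G c i)


open SimpleGraph

section Helpers
variable {V : Type*} [DecidableEq V]

private 
lemma acyclic_pendant {V : Type*} [DecidableEq V] {H K : SimpleGraph V} {u v : V}
    (hK : ∀ a b, K.Adj a b ↔ H.Adj a b ∨ s(a, b) = s(u, v))
    (hv : ∀ x, K.Adj v x → x = u)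
    (hH : H.IsAcyclic) : K.IsAcyclic := by
  intro x p hp
  by_cases hvs : v ∈ p.support
  · have hq := hp.rotate hvs
    set q := p.rotate v hvs with hqdef
    clear_value q
    cases q with
    | nil => exact hq.not_of_nil
    | @cons _ b _ hadj q' =>
      rw [Walk.cons_isCycle_iff] at hq
      obtain ⟨hq', hne⟩ := hq
      have hb : b = u := hv _ hadj
      have hdarts : q'.darts ≠ [] := by
        intro hnil
        have hlen : q'.length = 0 := by
          have := congrArg List.length hnil
          simpa [Walk.length_darts] using this
        exact hadj.ne (Walk.eq_of_length_eq_zero hlen).symm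
      set d := q'.darts.getLast hdarts with hd
      have hsnd : d.snd = v := by rw [hd, Walk.getLast_darts_eq_lastDart hdarts]; rfl
      have hadj2 : K.Adj d.fst d.snd := d.adj
      rw [hsnd] at hadj2
      have hfst : d.fst = u := hv _ hadj2.symm
      apply hne
      have hmem : d.edge ∈ q'.edges := by
        rw [Walk.edges]
        exact List.mem_map_of_mem (List.getLast_mem hdarts)
      have : d.edge = s(v, b) := by
        rw [Sym2.eq_swap]
        show s(d.fst, d.snd) = s(b, v)
        rw [hsnd, hfst, hb]
      rwa [this] at hmem
  · have hedges : ∀ e ∈ p.edges, e ∈ H.edgeSet := by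
      intro e he
      induction e with
      | h a b =>
        have hK' : K.Adj a b := p.edges_subset_edgeSet he
        rcases (hK a b).mp hK' with h1 | h2
        · exact h1
        · rcases Sym2.eq_iff.mp h2 with ⟨rfl, rfl⟩ | ⟨rfl, rfl⟩
          · exact absurd (Walk.snd_mem_support_of_mem_edges p he) hvs
          · exact absurd (Walk.fst_mem_support_of_mem_edges p he) hvs
    exact hH _ (hp.transfer hedges)

set_option linter.unusedSectionVars false


private lemma colorClass_update_ne {G : SimpleGraph V} {u v : V}
    (c' : Sym2 V → Fin 5) (j i : Fin 5) (hij : i ≠ j) :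
    colorClass G (fun e => if e = s(u, v) then j else c' e) i
      = colorClass (G.deleteEdges {s(u, v)}) c' i := by
  ext a b
  show G.Adj a b ∧ _ ↔ (G.deleteEdges {s(u, v)}).Adj a b ∧ _
  rw [deleteEdges_adj]
  by_cases h : s(a, b) = s(u, v) <;> simp [h, hij.symm]

private lemma colorClass_update_self_adj {G : SimpleGraph V} {u v : V} (huv : G.Adj u v)
    (c' : Sym2 V → Fin 5) (j : Fin 5) (a b : V) :
    (colorClass G (fun e => if e = s(u, v) then j else c' e) j).Adj a b
      ↔ (colorClass (G.deleteEdges {s(u, v)}) c' j).Adj a b ∨ s(a, b) = s(u, v) := by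
  show G.Adj a b ∧ _ ↔ ((G.deleteEdges {s(u, v)}).Adj a b ∧ _) ∨ _
  rw [deleteEdges_adj]
  by_cases h : s(a, b) = s(u, v)
  · have hG : G.Adj a b := by
      rcases Sym2.eq_iff.mp h with ⟨rfl, rfl⟩ | ⟨rfl, rfl⟩
      exacts [huv, huv.symm]
    simp [h, hG]
  · simp [h]

-- neighbor sets of the augmented class
private lemma neigh_self_v {G : SimpleGraph V} {u v : V} (huv : G.Adj u v)
    (c' : Sym2 V → Fin 5) (j : Fin 5) :
    (colorClass G (fun e => if e = s(u, v) then j else c' e) j).neighborSet v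
      = insert u ((colorClass (G.deleteEdges {s(u, v)}) c' j).neighborSet v) := by
  ext x
  simp only [mem_neighborSet, colorClass_update_self_adj huv, Set.mem_insert_iff]
  constructor
  · rintro (h | h)
    · exact Or.inr h
    · left
      have : s(v, x) = s(v, u) := by rwa [Sym2.eq_swap (a := u)] at h
      exact Sym2.congr_right.mp this
  · rintro (rfl | h)
    · exact Or.inr (Sym2.eq_swap)
    · exact Or.inl h

private lemma neigh_self_u {G : SimpleGraph V} {u v : V} (huv : G.Adj u v)
    (c' : Sym2 V → Fin 5) (j : Fin 5) :
    (colorClass G (fun e => if e = s(u, v) then j else c' e) j).neighborSet u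
      = insert v ((colorClass (G.deleteEdges {s(u, v)}) c' j).neighborSet u) := by
  ext x
  simp only [mem_neighborSet, colorClass_update_self_adj huv, Set.mem_insert_iff]
  constructor
  · rintro (h | h)
    · exact Or.inr h
    · exact Or.inl (Sym2.congr_right.mp h)
  · rintro (rfl | h)
    · exact Or.inr rfl
    · exact Or.inl h

private lemma neigh_self_other {G : SimpleGraph V} {u v : V} (huv : G.Adj u v)
    (c' : Sym2 V → Fin 5) (j : Fin 5) {w : V} (hwu : w ≠ u) (hwv : w ≠ v) :
    (colorClass G (fun e => if e = s(u, v) then j else c' e) j).neighborSet w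
      = (colorClass (G.deleteEdges {s(u, v)}) c' j).neighborSet w := by
  ext x
  simp only [mem_neighborSet, colorClass_update_self_adj huv]
  constructor
  · rintro (h | h)
    · exact h
    · rcases Sym2.eq_iff.mp h with ⟨rfl, _⟩ | ⟨rfl, _⟩
      exacts [absurd rfl hwu, absurd rfl hwv]
  · exact Or.inl

-- counting lemma
private lemma sum_colorClass [Fintype V] (G' : SimpleGraph V) [DecidableRel G'.Adj]
    (c' : Sym2 V → Fin 5) (w : V) :
    ∑ i : Fin 5, ((colorClass G' c' i).neighborSet w).ncard = G'.degree w := by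
  have hcard : ∀ i : Fin 5, ((colorClass G' c' i).neighborSet w).ncard
      = ((G'.neighborFinset w).filter (fun x => c' s(w, x) = i)).card := by
    intro i
    rw [← Set.ncard_coe_finset]
    congr 1
    ext x
    simp [colorClass, mem_neighborSet]
  simp_rw [hcard]
  exact (Finset.card_eq_sum_card_fiberwise (f := fun x => c' s(w, x))
    (t := Finset.univ) (fun x _ => Finset.mem_univ _)).symm

private lemma degree_delete [Fintype V] (G : SimpleGraph V) [DecidableRel G.Adj]
    {u v : V} (huv : G.Adj u v) [DecidableRel (G.deleteEdges {s(u, v)}).Adj] :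
    (G.deleteEdges {s(u, v)}).degree u + 1 = G.degree u := by
  classical
  have hset : (G.deleteEdges {s(u, v)}).neighborFinset u = (G.neighborFinset u).erase v := by
    ext x
    simp only [mem_neighborFinset, deleteEdges_adj, Set.mem_singleton_iff, Finset.mem_erase]
    rw [Sym2.congr_right]
    tauto
  show ((G.deleteEdges {s(u, v)}).neighborFinset u).card + 1 = (G.neighborFinset u).card
  rw [hset]
  exact Finset.card_erase_add_one (by rwa [mem_neighborFinset])



private lemma extend_forest (G : SimpleGraph V) (u v : V) (huv : G.Adj u v)
    (c' : Sym2 V → Fin 5)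
    (hm : IsMatchingGraph (colorClass (G.deleteEdges {s(u, v)}) c' 0))
    (hf : ∀ i : Fin 5, i ≠ 0 → IsLinearForest (colorClass (G.deleteEdges {s(u, v)}) c' i))
    (j : Fin 5) (hj0 : j ≠ 0)
    (hdv : (colorClass (G.deleteEdges {s(u, v)}) c' j).neighborSet v = ∅)
    (hdu : ((colorClass (G.deleteEdges {s(u, v)}) c' j).neighborSet u).ncard ≤ 1) :
    HasPartitionLFM G 4 := by
  refine ⟨fun e => if e = s(u, v) then j else c' e, ?_, ?_⟩
  · rw [show (0 : Fin (4 + 1)) = (0 : Fin 5) from rfl,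
      colorClass_update_ne c' j 0 (Ne.symm hj0)]
    exact hm
  · intro i hi
    by_cases hij : i = j
    · subst hij
      constructor
      · refine acyclic_pendant (H := colorClass (G.deleteEdges {s(u, v)}) c' i)
          (u := u) (v := v) (colorClass_update_self_adj huv c' i) ?_ (hf i hi).1
        intro x hx
        rcases (colorClass_update_self_adj huv c' i v x).mp hx with h1 | h2
        · exact absurd h1 (by simp [← mem_neighborSet, hdv])
        · have : s(v, x) = s(v, u) := by rwa [show (s(u,v) : Sym2 V) = s(v,u) from Sym2.eq_swap] at h2
          exact Sym2.congr_right.mp this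
      · intro w
        by_cases hwv : w = v
        · subst hwv
          rw [neigh_self_v huv, hdv]
          simp
        · by_cases hwu : w = u
          · subst hwu
            rw [neigh_self_u huv]
            exact le_trans (Set.ncard_insert_le _ _) (by omega)
          · rw [neigh_self_other huv c' i hwu hwv]
            exact (hf i hi).2 w
    · rw [colorClass_update_ne c' j i hij]
      exact hf i hi

private lemma extend_matching (G : SimpleGraph V) (u v : V) (huv : G.Adj u v)
    (c' : Sym2 V → Fin 5)
    (hm : IsMatchingGraph (colorClass (G.deleteEdges {s(u, v)}) c' 0))
    (hf : ∀ i : Fin 5, i ≠ 0 → IsLinearForest (colorClass (G.deleteEdges {s(u, v)}) c' i))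
    (hdu : (colorClass (G.deleteEdges {s(u, v)}) c' 0).neighborSet u = ∅)
    (hdv : (colorClass (G.deleteEdges {s(u, v)}) c' 0).neighborSet v = ∅) :
    HasPartitionLFM G 4 := by
  refine ⟨fun e => if e = s(u, v) then (0 : Fin 5) else c' e, ?_, ?_⟩
  · intro w
    by_cases hwv : w = v
    · subst hwv
      rw [show (0 : Fin (4 + 1)) = (0 : Fin 5) from rfl, neigh_self_v huv, hdv]
      simp
    · by_cases hwu : w = u
      · subst hwu
        rw [show (0 : Fin (4 + 1)) = (0 : Fin 5) from rfl, neigh_self_u huv, hdu]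
        simp
      · rw [show (0 : Fin (4 + 1)) = (0 : Fin 5) from rfl, neigh_self_other huv c' 0 hwu hwv]
        exact hm w
  · intro i hi
    rw [colorClass_update_ne c' 0 i hi]
    exact hf i hi

end Helpers

private lemma degree_delete' {V : Type*} [Fintype V] [DecidableEq V] (G : SimpleGraph V)
    [DecidableRel G.Adj] {u v : V} (huv : G.Adj u v)
    [DecidableRel (G.deleteEdges {s(u, v)}).Adj] :
    (G.deleteEdges {s(u, v)}).degree v + 1 = G.degree v := by
  have hset : (G.deleteEdges {s(u, v)}).neighborFinset v = (G.neighborFinset v).erase u := by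
    ext x
    simp only [SimpleGraph.mem_neighborFinset, SimpleGraph.deleteEdges_adj,
      Set.mem_singleton_iff, Finset.mem_erase]
    rw [show (s(u, v) : Sym2 V) = s(v, u) from Sym2.eq_swap, Sym2.congr_right]
    tauto
  show ((G.deleteEdges {s(u, v)}).neighborFinset v).card + 1 = (G.neighborFinset v).card
  rw [hset]
  exact Finset.card_erase_add_one (by rw [SimpleGraph.mem_neighborFinset]; exact huv.symm)

/-- Let `uv` be an edge of a simple graph `G` with `d(u) + d(v) ≤ 10`.
If the edges of `G - uv` can be partitioned into four linear forests and a matching,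
then so can the edges of `G`. -/
theorem reduce_edge {V : Type*} [Fintype V] [DecidableEq V] (G : SimpleGraph V)
    [DecidableRel G.Adj] (u v : V) (huv : G.Adj u v)
    (hdeg : G.degree u + G.degree v ≤ 10)
    (h : HasPartitionLFM (G.deleteEdges {s(u, v)}) 4) :
    HasPartitionLFM G 4 := by
  classical
  obtain ⟨c', hm, hf⟩ := h
  set G' := G.deleteEdges {s(u, v)} with hG'
  set d : Fin 5 → V → ℕ :=
    fun i w => ((colorClass G' c' i).neighborSet w).ncard with hd
  by_cases hA : ∃ j : Fin 5, j ≠ 0 ∧ d j u + d j v ≤ 1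
  · obtain ⟨j, hj0, hj⟩ := hA
    rcases (show d j v = 0 ∨ d j u = 0 by omega) with h0 | h0
    · exact extend_forest G u v huv c' hm hf j hj0
        ((Set.ncard_eq_zero (Set.toFinite _)).mp h0) (show d j u ≤ 1 by omega)
    · have hE : G.deleteEdges {s(v, u)} = G' := by
        rw [hG', show (s(v, u) : Sym2 V) = s(u, v) from Sym2.eq_swap]
      refine extend_forest G v u huv.symm c' ?_ ?_ j hj0 ?_ ?_
      · rw [hE]; exact hm
      · rw [hE]; exact hf
      · rw [hE]; exact (Set.ncard_eq_zero (Set.toFinite _)).mp h0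
      · rw [hE]; show d j v ≤ 1; omega
  · push_neg at hA
    have h1 := hA 1 (by decide)
    have h2 := hA 2 (by decide)
    have h3 := hA 3 (by decide)
    have h4 := hA 4 (by decide)
    have hsu : ∑ i : Fin 5, d i u = G'.degree u := sum_colorClass G' c' u
    have hsv : ∑ i : Fin 5, d i v = G'.degree v := sum_colorClass G' c' v
    rw [Fin.sum_univ_five] at hsu hsv
    have hdu1 : G'.degree u + 1 = G.degree u := degree_delete G huv
    have hdv1 : G'.degree v + 1 = G.degree v := degree_delete' G huv
    have h0u : d 0 u = 0 := by omega
    have h0v : d 0 v = 0 := by omega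
    exact extend_matching G u v huv c' hm hf
      ((Set.ncard_eq_zero (Set.toFinite _)).mp h0u)
      ((Set.ncard_eq_zero (Set.toFinite _)).mp h0v)
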